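/- Let k be a field, G an additive abelian group, and C a k-linear additive idempotent complete category equipped with a shift by G (a family of autoequivalences X ↦ X⟦g⟧ for g ∈ G with coherent isomorphisms X⟦g⟧⟦h⟧ ≅ X⟦g+h⟧ and X⟦0⟧ ≅ X, as in Mathlib's HasShift). Assume: (i) every Hom-space of C is finite-dimensional over k; (ii) there exist finitely many objects H₁, …, H_m such that every indecomposable object of C is isomorphic to H_i⟦g⟧ for some i and some g ∈ G; (iii) for all objects X, Y of C, the set {g ∈ G : there is a nonzero morphism X → Y⟦g⟧} is finite. Then every morphism p : X → Y of C admits a weak cokernel (a morphism c : Y → Z with p ≫ c = 0 such that every t : Y → T with p ≫ t = 0 factors as t = c ≫ u for some u : Z → T) and a weak kernel (the dual notion). -/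

import Mathlib

open CategoryTheory CategoryTheory.Limits

/-- An object of an additive category is indecomposable if it is non-zero and any
biproduct decomposition of it has a zero summand. -/
def IsIndecomposableObj {C : Type*} [Category C] [Preadditive C]
    [HasBinaryBiproducts C] (X : C) : Prop :=
  ¬ IsZero X ∧ ∀ (Y Z : C), (X ≅ Y ⊞ Z) → IsZero Y ∨ IsZero Z

section AuxPropSixSixteen

open Module

variable {C : Type*} [Category C] [Preadditive C]
  [HasFiniteBiproducts C] [HasBinaryBiproducts C]

/-- Any object is isomorphic to the biproduct of the constant family on `Fin 1`. -/
noncomputable def biproductSingleIsoAux (T : C) : T ≅ ⨁ (fun _ : Fin 1 => T) where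
  hom := biproduct.lift fun _ => 𝟙 T
  inv := biproduct.desc fun _ => 𝟙 T
  hom_inv_id := by rw [biproduct.lift_desc]; simp
  inv_hom_id := by
    apply biproduct.hom_ext
    intro j
    apply biproduct.hom_ext'
    intro j'
    have : j' = j := Subsingleton.elim _ _
    subst this
    simp

/-- A binary biproduct of two finite biproducts is a biproduct over the sum type. -/
noncomputable def biprodSumIsoAux {a b : ℕ} (f : Fin a → C) (g : Fin b → C) :
    (⨁ f) ⊞ (⨁ g) ≅ ⨁ (Sum.elim f g) where
  hom := biprod.desc (biproduct.desc fun j => biproduct.ι (Sum.elim f g) (Sum.inl j))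
    (biproduct.desc fun j => biproduct.ι (Sum.elim f g) (Sum.inr j))
  inv := biproduct.desc fun s => Sum.casesOn s (fun j => biproduct.ι f j ≫ biprod.inl)
    (fun j => biproduct.ι g j ≫ biprod.inr)
  hom_inv_id := by
    apply biprod.hom_ext'
    · apply biproduct.hom_ext'; intro j; simp; erw [biproduct.ι_desc_assoc, biproduct.ι_desc]
    · apply biproduct.hom_ext'; intro j; simp; erw [biproduct.ι_desc_assoc, biproduct.ι_desc]
  inv_hom_id := by
    apply biproduct.hom_ext'
    rintro (j | j) <;> erw [biproduct.ι_desc_assoc] <;> simp <;> erw [biproduct.ι_desc, Category.comp_id]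

variable (k : Type*) [Field k] [Linear k C]

/-- The injection of endomorphisms used to compare ranks. -/
noncomputable def endProdMapAux {T Y Z : C} (e : T ≅ Y ⊞ Z) :
    ((Y ⟶ Y) × (Z ⟶ Z)) →ₗ[k] (T ⟶ T) where
  toFun q := e.hom ≫ (biprod.fst ≫ q.1 ≫ biprod.inl + biprod.snd ≫ q.2 ≫ biprod.inr) ≫ e.inv
  map_add' q q' := by
    simp only [Prod.fst_add, Prod.snd_add, Preadditive.add_comp, Preadditive.comp_add]
    abel
  map_smul' c q := by
    simp only [Prod.smul_fst, Prod.smul_snd, Linear.smul_comp, Linear.comp_smul, smul_add,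
      Preadditive.comp_add, Preadditive.add_comp, RingHom.id_apply]

theorem endProdMapAux_apply {T Y Z : C} (e : T ≅ Y ⊞ Z) (q : (Y ⟶ Y) × (Z ⟶ Z)) :
    endProdMapAux k e q
      = e.hom ≫ (biprod.fst ≫ q.1 ≫ biprod.inl + biprod.snd ≫ q.2 ≫ biprod.inr) ≫ e.inv :=
  rfl

theorem endProdMapAux_injective {T Y Z : C} (e : T ≅ Y ⊞ Z) :
    Function.Injective (endProdMapAux k e) := by
  intro q q' h
  have h1 : ∀ r : (Y ⟶ Y) × (Z ⟶ Z),
      (biprod.inl ≫ e.inv) ≫ endProdMapAux k e r ≫ (e.hom ≫ biprod.fst) = r.1 := by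
    intro r
    simp [endProdMapAux_apply, Preadditive.comp_add, Preadditive.add_comp]
  have h2 : ∀ r : (Y ⟶ Y) × (Z ⟶ Z),
      (biprod.inr ≫ e.inv) ≫ endProdMapAux k e r ≫ (e.hom ≫ biprod.snd) = r.2 := by
    intro r
    simp [endProdMapAux_apply, Preadditive.comp_add, Preadditive.add_comp]
  have e1 : q.1 = q'.1 := by rw [← h1 q, ← h1 q', h]
  have e2 : q.2 = q'.2 := by rw [← h2 q, ← h2 q', h]
  exact Prod.ext e1 e2

/-- Every object decomposes as a finite biproduct of indecomposables. -/
theorem decomposeAux (hfd : ∀ X Y : C, FiniteDimensional k (X ⟶ Y)) :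
    ∀ (n : ℕ) (T : C), finrank k (T ⟶ T) ≤ n →
      ∃ (N : ℕ) (f : Fin N → C), (∀ j, IsIndecomposableObj (f j)) ∧ Nonempty (T ≅ ⨁ f) := by
  intro n
  induction n using Nat.strong_induction_on with
  | _ n IH =>
    intro T hT
    by_cases hz : IsZero T
    · refine ⟨0, Fin.elim0, fun j => j.elim0, ⟨hz.iso ?_⟩⟩
      rw [IsZero.iff_id_eq_zero, ← biproduct.total]
      simp
    by_cases hi : IsIndecomposableObj T
    · exact ⟨1, fun _ => T, fun _ => hi, ⟨biproductSingleIsoAux T⟩⟩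
    rw [IsIndecomposableObj, not_and] at hi
    have hi' := hi hz
    push_neg at hi'
    obtain ⟨Y, Z, e, hY, hZ⟩ := hi'
    haveI := hfd T T
    haveI := hfd Y Y
    haveI := hfd Z Z
    haveI : Nontrivial (Y ⟶ Y) :=
      ⟨⟨𝟙 Y, 0, fun h => hY ((IsZero.iff_id_eq_zero Y).mpr h)⟩⟩
    haveI : Nontrivial (Z ⟶ Z) :=
      ⟨⟨𝟙 Z, 0, fun h => hZ ((IsZero.iff_id_eq_zero Z).mpr h)⟩⟩
    have hle : finrank k ((Y ⟶ Y) × (Z ⟶ Z)) ≤ finrank k (T ⟶ T) :=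
      LinearMap.finrank_le_finrank_of_injective (endProdMapAux_injective k e)
    rw [Module.finrank_prod] at hle
    have hYpos : 0 < finrank k (Y ⟶ Y) := Module.finrank_pos
    have hZpos : 0 < finrank k (Z ⟶ Z) := Module.finrank_pos
    have hYlt : finrank k (Y ⟶ Y) < n := by omega
    have hZlt : finrank k (Z ⟶ Z) < n := by omega
    obtain ⟨a, f, hf, ⟨ef⟩⟩ := IH (finrank k (Y ⟶ Y)) hYlt Y le_rfl
    obtain ⟨b, g, hg, ⟨eg⟩⟩ := IH (finrank k (Z ⟶ Z)) hZlt Z le_rfl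
    refine ⟨a + b, Sum.elim f g ∘ finSumFinEquiv.symm, fun j => ?_,
      ⟨e ≪≫ biprod.mapIso ef eg ≪≫ biprodSumIsoAux f g ≪≫
        (biproduct.reindex finSumFinEquiv.symm (Sum.elim f g)).symm⟩⟩
    show IsIndecomposableObj (Sum.elim f g (finSumFinEquiv.symm j))
    rcases hj : finSumFinEquiv.symm j with j' | j'
    · exact hf j'
    · exact hg j'

/-- Weak kernel construction from a finite cover of the relevant indecomposables. -/
theorem weakKernelCoreAux (hfd : ∀ X Y : C, FiniteDimensional k (X ⟶ Y))
    {X Y : C} (p : X ⟶ Y) {nM : ℕ} (M : Fin nM → C)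
    (hM : ∀ T : C, IsIndecomposableObj T → (∃ f : T ⟶ X, f ≠ 0) → ∃ a, Nonempty (T ≅ M a)) :
    ∃ (W : C) (i : W ⟶ X), i ≫ p = 0 ∧
      ∀ (T : C) (t : T ⟶ X), t ≫ p = 0 → ∃ u : T ⟶ W, t = u ≫ i := by
  classical
  haveI := hfd (⨁ M) X
  haveI := hfd (⨁ M) Y
  let Φ : ((⨁ M) ⟶ X) →ₗ[k] ((⨁ M) ⟶ Y) :=
    { toFun := fun f => f ≫ p
      map_add' := fun f g => Preadditive.add_comp _ _ _ _ _ _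
      map_smul' := fun c f => Linear.smul_comp _ _ _ _ _ _ }
  obtain ⟨nK, s, hs⟩ := Module.Finite.exists_fin (R := k) (M := LinearMap.ker Φ)
  refine ⟨⨁ fun _ : Fin nK => ⨁ M, biproduct.desc fun b => ((s b : LinearMap.ker Φ) :
    (⨁ M) ⟶ X), ?_, ?_⟩
  · apply biproduct.hom_ext'
    intro b
    rw [biproduct.ι_desc_assoc, comp_zero]
    exact LinearMap.mem_ker.mp (s b).2
  · intro T t ht
    obtain ⟨N, Tf, hTf, ⟨iso⟩⟩ := decomposeAux k hfd (finrank k (T ⟶ T)) T le_rfl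
    have key : ∀ j : Fin N, ∃ u : Tf j ⟶ ⨁ (fun _ : Fin nK => ⨁ M),
        u ≫ biproduct.desc (fun b => ((s b : LinearMap.ker Φ) : (⨁ M) ⟶ X))
          = biproduct.ι Tf j ≫ iso.inv ≫ t := by
      intro j
      by_cases hsj : biproduct.ι Tf j ≫ iso.inv ≫ t = 0
      · exact ⟨0, by rw [zero_comp, hsj]⟩
      · obtain ⟨a, ⟨φ⟩⟩ := hM (Tf j) (hTf j) ⟨_, hsj⟩
        have hker : biproduct.π M a ≫ φ.inv ≫ biproduct.ι Tf j ≫ iso.inv ≫ t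
            ∈ LinearMap.ker Φ := by
          rw [LinearMap.mem_ker]
          show (biproduct.π M a ≫ φ.inv ≫ biproduct.ι Tf j ≫ iso.inv ≫ t) ≫ p = 0
          simp only [Category.assoc, ht, comp_zero]
        have hmem : (⟨_, hker⟩ : LinearMap.ker Φ) ∈ Submodule.span k (Set.range s) := by
          rw [hs]; trivial
        obtain ⟨c, hc⟩ := (Submodule.mem_span_range_iff_exists_fun k).mp hmem
        have hc' : (∑ b, c b • ((s b : LinearMap.ker Φ) : (⨁ M) ⟶ X))
            = biproduct.π M a ≫ φ.inv ≫ biproduct.ι Tf j ≫ iso.inv ≫ t := by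
          have h2 := congrArg (Submodule.subtype (LinearMap.ker Φ)) hc
          rw [map_sum] at h2
          simpa using h2
        refine ⟨φ.hom ≫ biproduct.ι M a ≫ biproduct.lift (fun b => c b • 𝟙 (⨁ M)), ?_⟩
        rw [Category.assoc, Category.assoc, biproduct.lift_desc]
        have hsum : (∑ b, (c b • 𝟙 (⨁ M)) ≫ ((s b : LinearMap.ker Φ) : (⨁ M) ⟶ X))
            = ∑ b, c b • ((s b : LinearMap.ker Φ) : (⨁ M) ⟶ X) := by
          simp [Linear.smul_comp]
        rw [hsum, hc']
        simp
    choose u hu using key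
    refine ⟨iso.hom ≫ biproduct.desc u, ?_⟩
    have hdu : biproduct.desc u ≫ biproduct.desc (fun b => ((s b : LinearMap.ker Φ) :
        (⨁ M) ⟶ X)) = iso.inv ≫ t := by
      apply biproduct.hom_ext'
      intro j
      rw [biproduct.ι_desc_assoc, hu j]
    rw [Category.assoc, hdu, Iso.hom_inv_id_assoc]

/-- Weak cokernel construction from a finite cover of the relevant indecomposables. -/
theorem weakCokernelCoreAux (hfd : ∀ X Y : C, FiniteDimensional k (X ⟶ Y))
    {X Y : C} (p : X ⟶ Y) {nM : ℕ} (M : Fin nM → C)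
    (hM : ∀ T : C, IsIndecomposableObj T → (∃ f : Y ⟶ T, f ≠ 0) → ∃ a, Nonempty (T ≅ M a)) :
    ∃ (Z : C) (c : Y ⟶ Z), p ≫ c = 0 ∧
      ∀ (T : C) (t : Y ⟶ T), p ≫ t = 0 → ∃ u : Z ⟶ T, t = c ≫ u := by
  classical
  haveI := hfd Y (⨁ M)
  haveI := hfd X (⨁ M)
  let Φ : (Y ⟶ ⨁ M) →ₗ[k] (X ⟶ ⨁ M) :=
    { toFun := fun f => p ≫ f
      map_add' := fun f g => Preadditive.comp_add _ _ _ _ _ _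
      map_smul' := fun c f => Linear.comp_smul _ _ _ _ _ _ }
  obtain ⟨nK, s, hs⟩ := Module.Finite.exists_fin (R := k) (M := LinearMap.ker Φ)
  refine ⟨⨁ fun _ : Fin nK => ⨁ M, biproduct.lift fun b => ((s b : LinearMap.ker Φ) :
    Y ⟶ ⨁ M), ?_, ?_⟩
  · apply biproduct.hom_ext
    intro b
    rw [Category.assoc, biproduct.lift_π, zero_comp]
    exact LinearMap.mem_ker.mp (s b).2
  · intro T t ht
    obtain ⟨N, Tf, hTf, ⟨iso⟩⟩ := decomposeAux k hfd (finrank k (T ⟶ T)) T le_rfl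
    have key : ∀ j : Fin N, ∃ u : (⨁ fun _ : Fin nK => ⨁ M) ⟶ Tf j,
        biproduct.lift (fun b => ((s b : LinearMap.ker Φ) : Y ⟶ ⨁ M)) ≫ u
          = t ≫ iso.hom ≫ biproduct.π Tf j := by
      intro j
      by_cases hsj : t ≫ iso.hom ≫ biproduct.π Tf j = 0
      · exact ⟨0, by rw [comp_zero, hsj]⟩
      · obtain ⟨a, ⟨φ⟩⟩ := hM (Tf j) (hTf j) ⟨_, hsj⟩
        have hker : (t ≫ iso.hom ≫ biproduct.π Tf j) ≫ φ.hom ≫ biproduct.ι M a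
            ∈ LinearMap.ker Φ := by
          rw [LinearMap.mem_ker]
          show p ≫ (t ≫ iso.hom ≫ biproduct.π Tf j) ≫ φ.hom ≫ biproduct.ι M a = 0
          simp only [← Category.assoc]
          rw [ht]
          simp
        have hmem : (⟨_, hker⟩ : LinearMap.ker Φ) ∈ Submodule.span k (Set.range s) := by
          rw [hs]; trivial
        obtain ⟨c, hc⟩ := (Submodule.mem_span_range_iff_exists_fun k).mp hmem
        have hc' : (∑ b, c b • ((s b : LinearMap.ker Φ) : Y ⟶ ⨁ M))
            = (t ≫ iso.hom ≫ biproduct.π Tf j) ≫ φ.hom ≫ biproduct.ι M a := by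
          have h2 := congrArg (Submodule.subtype (LinearMap.ker Φ)) hc
          rw [map_sum] at h2
          simpa using h2
        refine ⟨biproduct.desc (fun b => c b • 𝟙 (⨁ M)) ≫ biproduct.π M a ≫ φ.inv, ?_⟩
        rw [← Category.assoc, biproduct.lift_desc]
        have hsum : (∑ b, ((s b : LinearMap.ker Φ) : Y ⟶ ⨁ M) ≫ (c b • 𝟙 (⨁ M)))
            = ∑ b, c b • ((s b : LinearMap.ker Φ) : Y ⟶ ⨁ M) := by
          simp [Linear.comp_smul]
        rw [hsum, hc']
        simp
    choose u hu using key
    refine ⟨biproduct.lift u ≫ iso.inv, ?_⟩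
    have hlu : biproduct.lift (fun b => ((s b : LinearMap.ker Φ) : Y ⟶ ⨁ M)) ≫
        biproduct.lift u = t ≫ iso.hom := by
      apply biproduct.hom_ext
      intro j
      rw [Category.assoc, biproduct.lift_π, hu j, Category.assoc]
    rw [← Category.assoc, hlu, Category.assoc, Iso.hom_inv_id, Category.comp_id]

end AuxPropSixSixteen

section CoverAux

variable (G : Type*) [AddCommGroup G]
  {C : Type*} [Category C] [Preadditive C]
  [HasBinaryBiproducts C] [HasShift C G]

/-- Cover lemma for the weak kernel side: a finite family of objects containing, up to
isomorphism, every indecomposable admitting a nonzero map to `X`. -/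
theorem coverKerAux
    (hindec : ∃ (m : ℕ) (H : Fin m → C), ∀ X : C, IsIndecomposableObj X →
      ∃ (i : Fin m) (g : G), Nonempty (X ≅ (shiftFunctor C g).obj (H i)))
    (hhomfin : ∀ X Y : C,
      {g : G | ∃ f : X ⟶ (shiftFunctor C g).obj Y, f ≠ 0}.Finite) (X : C) :
    ∃ (n : ℕ) (M : Fin n → C), ∀ T : C, IsIndecomposableObj T →
      (∃ f : T ⟶ X, f ≠ 0) → ∃ a, Nonempty (T ≅ M a) := by
  classical
  obtain ⟨m, H, hH⟩ := hindec
  have hfin : ∀ i : Fin m,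
      {g : G | ∃ f : (shiftFunctor C g).obj (H i) ⟶ X, f ≠ 0}.Finite := by
    intro i
    apply ((hhomfin (H i) X).image Neg.neg).subset
    rintro g ⟨f, hf⟩
    refine ⟨-g, ?_, neg_neg g⟩
    let E := (shiftEquiv C g).toAdjunction.homEquiv (H i) X
    exact ⟨E f - E 0, sub_ne_zero.mpr (E.injective.ne hf)⟩
  let S : Fin m → Finset G := fun i => (hfin i).toFinset
  let J := (i : Fin m) × {g : G // g ∈ S i}
  refine ⟨Fintype.card J, fun a =>
    (fun j : (i : Fin m) × {g : G // g ∈ S i} =>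
      (shiftFunctor C (j.2 : G)).obj (H j.1)) ((Fintype.equivFin J).symm a), ?_⟩
  intro T hT hf0
  obtain ⟨i, g, ⟨φ⟩⟩ := hH T hT
  have hg : g ∈ S i := by
    rw [Set.Finite.mem_toFinset]
    obtain ⟨f, hf⟩ := hf0
    exact ⟨φ.inv ≫ f, fun h => hf (by rw [← Iso.hom_inv_id_assoc φ f, h, comp_zero])⟩
  refine ⟨Fintype.equivFin J ⟨i, ⟨g, hg⟩⟩, ⟨φ ≪≫ eqToIso ?_⟩⟩
  exact (congrArg (fun j : (i : Fin m) × {g : G // g ∈ S i} =>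
    (shiftFunctor C (j.2 : G)).obj (H j.1))
    (Equiv.symm_apply_apply (Fintype.equivFin J) ⟨i, ⟨g, hg⟩⟩)).symm

/-- Cover lemma for the weak cokernel side: a finite family of objects containing, up to
isomorphism, every indecomposable admitting a nonzero map from `Y`. -/
theorem coverCokerAux
    (hindec : ∃ (m : ℕ) (H : Fin m → C), ∀ X : C, IsIndecomposableObj X →
      ∃ (i : Fin m) (g : G), Nonempty (X ≅ (shiftFunctor C g).obj (H i)))
    (hhomfin : ∀ X Y : C,
      {g : G | ∃ f : X ⟶ (shiftFunctor C g).obj Y, f ≠ 0}.Finite) (Y : C) :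
    ∃ (n : ℕ) (M : Fin n → C), ∀ T : C, IsIndecomposableObj T →
      (∃ f : Y ⟶ T, f ≠ 0) → ∃ a, Nonempty (T ≅ M a) := by
  classical
  obtain ⟨m, H, hH⟩ := hindec
  have hfin : ∀ i : Fin m,
      {g : G | ∃ f : Y ⟶ (shiftFunctor C g).obj (H i), f ≠ 0}.Finite := fun i => hhomfin Y (H i)
  let S : Fin m → Finset G := fun i => (hfin i).toFinset
  let J := (i : Fin m) × {g : G // g ∈ S i}
  refine ⟨Fintype.card J, fun a =>
    (fun j : (i : Fin m) × {g : G // g ∈ S i} =>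
      (shiftFunctor C (j.2 : G)).obj (H j.1)) ((Fintype.equivFin J).symm a), ?_⟩
  intro T hT hf0
  obtain ⟨i, g, ⟨φ⟩⟩ := hH T hT
  have hg : g ∈ S i := by
    rw [Set.Finite.mem_toFinset]
    obtain ⟨f, hf⟩ := hf0
    refine ⟨f ≫ φ.hom, fun h => hf ?_⟩
    rw [← Category.comp_id f, ← φ.hom_inv_id, ← Category.assoc, h, zero_comp]
  refine ⟨Fintype.equivFin J ⟨i, ⟨g, hg⟩⟩, ⟨φ ≪≫ eqToIso ?_⟩⟩
  exact (congrArg (fun j : (i : Fin m) × {g : G // g ∈ S i} =>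
    (shiftFunctor C (j.2 : G)).obj (H j.1))
    (Equiv.symm_apply_apply (Fintype.equivFin J) ⟨i, ⟨g, hg⟩⟩)).symm

end CoverAux

/-- Proposition 6.16: let `C` be a `k`-linear additive idempotent complete category
with a shift by an abelian group `G`, such that (i) all Hom-spaces are
finite-dimensional over `k`; (ii) there are finitely many objects `H₁, …, H_m` such
that every indecomposable object is isomorphic to some shift `H_i⟦g⟧`; and
(iii) for all objects `X, Y` only finitely many `g ∈ G` admit a nonzero morphism
`X ⟶ Y⟦g⟧`. Then every morphism of `C` admits a weak cokernel and a weak kernel. -/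
theorem hasWeakKernels_and_weakCokernels_of_graded_finitary
    (k : Type*) [Field k] (G : Type*) [AddCommGroup G]
    {C : Type*} [Category C] [Preadditive C] [Linear k C]
    [HasFiniteBiproducts C] [HasBinaryBiproducts C] [IsIdempotentComplete C] [HasShift C G]
    (hfd : ∀ X Y : C, FiniteDimensional k (X ⟶ Y))
    (hindec : ∃ (m : ℕ) (H : Fin m → C), ∀ X : C, IsIndecomposableObj X →
      ∃ (i : Fin m) (g : G), Nonempty (X ≅ (shiftFunctor C g).obj (H i)))
    (hhomfin : ∀ X Y : C,
      {g : G | ∃ f : X ⟶ (shiftFunctor C g).obj Y, f ≠ 0}.Finite) :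
    ∀ {X Y : C} (p : X ⟶ Y),
      (∃ (Z : C) (c : Y ⟶ Z), p ≫ c = 0 ∧
        ∀ (T : C) (t : Y ⟶ T), p ≫ t = 0 → ∃ u : Z ⟶ T, t = c ≫ u) ∧
      (∃ (W : C) (i : W ⟶ X), i ≫ p = 0 ∧
        ∀ (T : C) (t : T ⟶ X), t ≫ p = 0 → ∃ u : T ⟶ W, t = u ≫ i) := by
  intro X Y p
  constructor
  · obtain ⟨n, M, hM⟩ := coverCokerAux G hindec hhomfin Y
    exact weakCokernelCoreAux k hfd p M hM
  · obtain ⟨n, M, hM⟩ := coverKerAux G hindec hhomfin X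
    exact weakKernelCoreAux k hfd p M hM
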